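/- Let f = a_0 + a_1 z + ... + a_m z^m ∈ ℤ[z] be primitive. Suppose there exist reals 0 < α < β and an index j ∈ {0,...,m} with |a_j| α^j > (β/α)^{m-j} Σ_{i≠j} |a_i| α^i. If there exist natural numbers n, d, k, ℓ ≤ m and a prime p ∤ d with β - d ≥ n ≥ α + d, f(n) = ± p^k d, gcd(k, ℓ) = 1, p^k | f^{(i)}(n)/i! for i = 0,...,ℓ-1, and (when k > 1) p ∤ f^{(ℓ)}(n)/ℓ!, then f is irreducible in ℤ[z]. -/

import Mathlib

set_option maxHeartbeats 1000000

open Polynomial Finset in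
lemma keyval (p k ℓ : ℕ) (hp : p.Prime) (hk : 0 < k) (hℓ : 0 < ℓ)
    (hcop : Nat.Coprime k ℓ) (G H : Polynomial ℤ)
    (hF0 : ¬ ((p:ℤ))^(k+1) ∣ (G*H).coeff 0)
    (hdiv : ∀ i < ℓ, ((p:ℤ))^k ∣ (G*H).coeff i)
    (hℓnd : 1 < k → ¬ (p:ℤ) ∣ (G*H).coeff ℓ) :
    ¬ (p:ℤ) ∣ G.coeff 0 ∨ ¬ (p:ℤ) ∣ H.coeff 0 := by
  haveI : Fact p.Prime := ⟨hp⟩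
  have hpZ : Prime ((p:ℤ)) := Nat.prime_iff_prime_int.mp hp
  by_contra hcon
  push_neg at hcon
  obtain ⟨hG0, hH0⟩ := hcon
  have hc0 : (G*H).coeff 0 = G.coeff 0 * H.coeff 0 := Polynomial.mul_coeff_zero G H
  have hc0k : ((p:ℤ))^k ∣ (G*H).coeff 0 := hdiv 0 hℓ
  have hc0ne : (G*H).coeff 0 ≠ 0 := fun h => hF0 (h ▸ dvd_zero _)
  have hG0ne : G.coeff 0 ≠ 0 := fun h => hc0ne (by rw [hc0, h, zero_mul])
  have hH0ne : H.coeff 0 ≠ 0 := fun h => hc0ne (by rw [hc0, h, mul_zero])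
  have hvd : ∀ (x : ℤ) (u : ℕ), x ≠ 0 → (((p:ℤ)^u ∣ x) ↔ u ≤ padicValInt p x) := by
    intro x u hx
    rw [padicValInt_dvd_iff]
    exact or_iff_right hx
  have hv1 : ∀ (x : ℤ), x ≠ 0 → ((p:ℤ) ∣ x ↔ 1 ≤ padicValInt p x) := by
    intro x hx
    rw [← hvd x 1 hx, pow_one]
  rcases Nat.lt_or_ge 1 k with hk2 | hk1
  swap
  · -- k = 1
    have hk1' : k = 1 := le_antisymm hk1 hk
    apply hF0
    rw [hk1', hc0, sq]
    exact mul_dvd_mul hG0 hH0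
  -- now k ≥ 2
  have hndℓ : ¬ (p:ℤ) ∣ (G*H).coeff ℓ := hℓnd hk2
  have hexG : ∃ i, ¬ (p:ℤ) ∣ G.coeff i := by
    by_contra h
    push_neg at h
    exact hndℓ (by rw [coeff_mul]; exact Finset.dvd_sum fun x _ => (h x.1).mul_right _)
  have hexH : ∃ i, ¬ (p:ℤ) ∣ H.coeff i := by
    by_contra h
    push_neg at h
    exact hndℓ (by rw [coeff_mul]; exact Finset.dvd_sum fun x _ => (h x.2).mul_left _)
  set s := Nat.find hexG with hs_def
  set t := Nat.find hexH with ht_def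
  have hs : ¬ (p:ℤ) ∣ G.coeff s := Nat.find_spec hexG
  have ht : ¬ (p:ℤ) ∣ H.coeff t := Nat.find_spec hexH
  have hslt : ∀ i < s, (p:ℤ) ∣ G.coeff i := fun i hi => by
    have := Nat.find_min hexG hi; simpa using this
  have htlt : ∀ i < t, (p:ℤ) ∣ H.coeff i := fun i hi => by
    have := Nat.find_min hexH hi; simpa using this
  clear_value s t
  have hGsne : G.coeff s ≠ 0 := fun h => hs (h ▸ dvd_zero _)
  have hHtne : H.coeff t ≠ 0 := fun h => ht (h ▸ dvd_zero _)
  have hs1 : 1 ≤ s := by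
    rcases Nat.eq_zero_or_pos s with h | h
    · exact absurd (h ▸ hs) (fun hh => hh hG0)
    · exact h
  have ht1 : 1 ≤ t := by
    rcases Nat.eq_zero_or_pos t with h | h
    · exact absurd (h ▸ ht) (fun hh => hh hH0)
    · exact h
  have hdr : ∀ r < s + t, (p:ℤ) ∣ (G*H).coeff r := by
    intro r hr
    rw [coeff_mul]
    refine Finset.dvd_sum ?_
    rintro ⟨i, j⟩ hij
    rw [Finset.HasAntidiagonal.mem_antidiagonal] at hij
    rcases Nat.lt_or_ge i s with h | h
    · exact (hslt i h).mul_right _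
    · exact (htlt j (by omega)).mul_left _
  have hnst : ¬ (p:ℤ) ∣ (G*H).coeff (s + t) := by
    rw [coeff_mul]
    have hmem : ((s,t) : ℕ × ℕ) ∈ Finset.HasAntidiagonal.antidiagonal (s+t) := by
      rw [Finset.HasAntidiagonal.mem_antidiagonal]
    rw [← Finset.add_sum_erase _ _ hmem]
    intro hdvd
    have hrest : (p:ℤ) ∣ ∑ x ∈ (Finset.HasAntidiagonal.antidiagonal (s+t)).erase (s,t),
        G.coeff x.1 * H.coeff x.2 := by
      refine Finset.dvd_sum ?_
      rintro ⟨i, j⟩ hij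
      rw [Finset.mem_erase, Finset.HasAntidiagonal.mem_antidiagonal] at hij
      obtain ⟨hne, hij⟩ := hij
      rcases Nat.lt_or_ge i s with h | h
      · exact (hslt i h).mul_right _
      · have hjt : j < t := by
          rcases Nat.lt_or_ge j t with h' | h'
          · exact h'
          · exfalso; apply hne
            have hi : i = s := by omega
            have hj : j = t := by omega
            simp [hi, hj]
        exact (htlt j hjt).mul_left _
    have hmain : (p:ℤ) ∣ G.coeff s * H.coeff t := by
      have := dvd_sub hdvd hrest
      simpa using this
    rcases hpZ.2.2 _ _ hmain with h | h
    · exact hs h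
    · exact ht h
  have hstℓ : s + t = ℓ := by
    rcases Nat.lt_trichotomy (s + t) ℓ with h | h | h
    · exact absurd (dvd_trans (dvd_pow_self _ (Nat.pos_of_ne_zero (by omega)).ne') (hdiv _ h)) hnst
    · exact h
    · exact absurd (hdr ℓ h) hndℓ
  -- weights
  have hGne : G ≠ 0 := fun h => hG0ne (by rw [h, Polynomial.coeff_zero])
  have hHne : H ≠ 0 := fun h => hH0ne (by rw [h, Polynomial.coeff_zero])
  set ωG : ℕ → ℕ := fun i => ℓ * padicValInt p (G.coeff i) + k * i with hωG_def
  set ωH : ℕ → ℕ := fun i => ℓ * padicValInt p (H.coeff i) + k * i with hωH_def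
  have hGsupp : G.support.Nonempty := Polynomial.support_nonempty.mpr hGne
  have hHsupp : H.support.Nonempty := Polynomial.support_nonempty.mpr hHne
  set WG := G.support.inf' hGsupp ωG with hWG_def
  set WH := H.support.inf' hHsupp ωH with hWH_def
  have hexG0 : ∃ i, i ∈ G.support ∧ ωG i = WG := by
    obtain ⟨i, hi, hieq⟩ := Finset.exists_mem_eq_inf' hGsupp ωG
    exact ⟨i, hi, hieq.symm⟩
  have hexH0 : ∃ i, i ∈ H.support ∧ ωH i = WH := by
    obtain ⟨i, hi, hieq⟩ := Finset.exists_mem_eq_inf' hHsupp ωH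
    exact ⟨i, hi, hieq.symm⟩
  set i0 := Nat.find hexG0 with hi0_def
  set j0 := Nat.find hexH0 with hj0_def
  have hi0mem : i0 ∈ G.support ∧ ωG i0 = WG := Nat.find_spec hexG0
  have hj0mem : j0 ∈ H.support ∧ ωH j0 = WH := Nat.find_spec hexH0
  have hWGle : ∀ i ∈ G.support, WG ≤ ωG i := fun i hi => Finset.inf'_le _ hi
  have hWHle : ∀ i ∈ H.support, WH ≤ ωH i := fun i hi => Finset.inf'_le _ hi
  have hWGlt : ∀ i ∈ G.support, i < i0 → WG < ωG i := by
    intro i hi hlt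
    rcases Nat.lt_or_ge WG (ωG i) with h | h
    · exact h
    · exfalso
      have heq : ωG i = WG := le_antisymm h (hWGle i hi)
      exact Nat.find_min hexG0 hlt ⟨hi, heq⟩
  have hWHlt : ∀ i ∈ H.support, i < j0 → WH < ωH i := by
    intro i hi hlt
    rcases Nat.lt_or_ge WH (ωH i) with h | h
    · exact h
    · exfalso
      have heq : ωH i = WH := le_antisymm h (hWHle i hi)
      exact Nat.find_min hexH0 hlt ⟨hi, heq⟩
  clear_value i0 j0 WG WH
  -- valuations at 0 and s, t
  set a := padicValInt p (G.coeff 0) with ha_def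
  set b := padicValInt p (H.coeff 0) with hb_def
  have hvc0 : padicValInt p ((G*H).coeff 0) = a + b := by
    rw [hc0]; exact padicValInt.mul hG0ne hH0ne
  have hvc0k : padicValInt p ((G*H).coeff 0) = k := by
    have h1 : k ≤ padicValInt p ((G*H).coeff 0) := (hvd _ k hc0ne).mp hc0k
    have h2 : ¬ (k + 1 ≤ padicValInt p ((G*H).coeff 0)) := fun h => hF0 ((hvd _ (k+1) hc0ne).mpr h)
    omega
  have hab : a + b = k := by rw [← hvc0, hvc0k]
  clear_value a b
  have hvGs : padicValInt p (G.coeff s) = 0 := by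
    rcases Nat.eq_zero_or_pos (padicValInt p (G.coeff s)) with h | h
    · exact h
    · exact absurd ((hv1 _ hGsne).mpr h) hs
  have hvHt : padicValInt p (H.coeff t) = 0 := by
    rcases Nat.eq_zero_or_pos (padicValInt p (H.coeff t)) with h | h
    · exact h
    · exact absurd ((hv1 _ hHtne).mpr h) ht
  have h0G : (0:ℕ) ∈ G.support := Polynomial.mem_support_iff.mpr hG0ne
  have h0H : (0:ℕ) ∈ H.support := Polynomial.mem_support_iff.mpr hH0ne
  have hsG : s ∈ G.support := Polynomial.mem_support_iff.mpr hGsne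
  have htH : t ∈ H.support := Polynomial.mem_support_iff.mpr hHtne
  -- main term analysis at r0 = i0 + j0
  set r0 := i0 + j0 with hr0_def
  set vm := padicValInt p (G.coeff i0) + padicValInt p (H.coeff j0) with hvm_def
  have hωsum : ωG i0 + ωH j0 = ℓ * vm + k * r0 := by
    simp only [hωG_def, hωH_def, hvm_def, hr0_def]
    ring
  clear_value r0 vm
  have hrest : ∀ x ∈ (Finset.HasAntidiagonal.antidiagonal r0).erase (i0, j0),
      ((p:ℤ))^(vm+1) ∣ G.coeff x.1 * H.coeff x.2 := by
    rintro ⟨i, j⟩ hij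
    rw [Finset.mem_erase, Finset.HasAntidiagonal.mem_antidiagonal] at hij
    obtain ⟨hne, hij⟩ := hij
    by_cases hGi : G.coeff i = 0
    · rw [hGi, zero_mul]; exact dvd_zero _
    by_cases hHj : H.coeff j = 0
    · rw [hHj, mul_zero]; exact dvd_zero _
    have hiG : i ∈ G.support := Polynomial.mem_support_iff.mpr hGi
    have hjH : j ∈ H.support := Polynomial.mem_support_iff.mpr hHj
    have hkey : vm + 1 ≤ padicValInt p (G.coeff i) + padicValInt p (H.coeff j) := by
      have hkij : k * i + k * j = k * r0 := by
        rw [← Nat.mul_add, hij]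
      rcases Nat.lt_trichotomy i i0 with h | h | h
      · have h1 : WG < ωG i := hWGlt i hiG h
        have h2 : WH ≤ ωH j := hWHle j hjH
        have h3 : ωG i0 + ωH j0 < ωG i + ωH j := by
          rw [hi0mem.2, hj0mem.2]; omega
        rw [hωsum] at h3
        simp only [hωG_def, hωH_def] at h3
        have h4 : ℓ * vm < ℓ * (padicValInt p (G.coeff i) + padicValInt p (H.coeff j)) := by
          rw [Nat.mul_add]
          omega
        have := Nat.lt_of_mul_lt_mul_left h4
        omega
      · exfalso; apply hne; have : j = j0 := by omega
        simp [h, this]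
      · have hjj : j < j0 := by omega
        have h1 : WH < ωH j := hWHlt j hjH hjj
        have h2 : WG ≤ ωG i := hWGle i hiG
        have h3 : ωG i0 + ωH j0 < ωG i + ωH j := by
          rw [hi0mem.2, hj0mem.2]; omega
        rw [hωsum] at h3
        simp only [hωG_def, hωH_def] at h3
        have h4 : ℓ * vm < ℓ * (padicValInt p (G.coeff i) + padicValInt p (H.coeff j)) := by
          rw [Nat.mul_add]
          omega
        have := Nat.lt_of_mul_lt_mul_left h4
        omega
    calc ((p:ℤ))^(vm+1) ∣ ((p:ℤ))^(padicValInt p (G.coeff i) + padicValInt p (H.coeff j)) :=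
          pow_dvd_pow _ hkey
      _ ∣ G.coeff i * H.coeff j := by
          rw [pow_add]
          exact mul_dvd_mul (padicValInt_dvd _) (padicValInt_dvd _)
  have hmainnd : ¬ ((p:ℤ))^(vm+1) ∣ G.coeff i0 * H.coeff j0 := by
    have hGi0 : G.coeff i0 ≠ 0 := Polynomial.mem_support_iff.mp hi0mem.1
    have hHj0 : H.coeff j0 ≠ 0 := Polynomial.mem_support_iff.mp hj0mem.1
    intro h
    have := (hvd _ (vm+1) (mul_ne_zero hGi0 hHj0)).mp h
    rw [padicValInt.mul hGi0 hHj0] at this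
    omega
  have hcr0nd : ¬ ((p:ℤ))^(vm+1) ∣ (G*H).coeff r0 := by
    intro h
    apply hmainnd
    have hmem : ((i0,j0) : ℕ × ℕ) ∈ Finset.HasAntidiagonal.antidiagonal r0 := by
      simp only [Finset.HasAntidiagonal.mem_antidiagonal]
      omega
    have hsum : (G*H).coeff r0 = G.coeff i0 * H.coeff j0 +
        ∑ x ∈ (Finset.HasAntidiagonal.antidiagonal r0).erase (i0,j0), G.coeff x.1 * H.coeff x.2 := by
      rw [coeff_mul, ← Finset.add_sum_erase _ _ hmem]
    have hrestd : ((p:ℤ))^(vm+1) ∣ ∑ x ∈ (Finset.HasAntidiagonal.antidiagonal r0).erase (i0,j0),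
        G.coeff x.1 * H.coeff x.2 := Finset.dvd_sum hrest
    have : G.coeff i0 * H.coeff j0 = (G*H).coeff r0 - ∑ x ∈ (Finset.HasAntidiagonal.antidiagonal r0).erase (i0,j0),
        G.coeff x.1 * H.coeff x.2 := by rw [hsum]; ring
    rw [this]
    exact dvd_sub h hrestd
  have hcr0ne : (G*H).coeff r0 ≠ 0 := fun h => hcr0nd (h ▸ dvd_zero _)
  have hvcr0 : padicValInt p ((G*H).coeff r0) ≤ vm := by
    have h2 : ¬ (vm + 1 ≤ padicValInt p ((G*H).coeff r0)) :=
      fun h => hcr0nd ((hvd _ (vm+1) hcr0ne).mpr h)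
    omega
  -- claim 1 : k * ℓ ≤ ℓ * v(c_{r0}) + k * r0
  have hclaim1 : k * ℓ ≤ ℓ * padicValInt p ((G*H).coeff r0) + k * r0 := by
    rcases Nat.eq_zero_or_pos r0 with h0 | hpos
    · rw [h0, hvc0k]
      have : k * ℓ = ℓ * k := Nat.mul_comm _ _
      omega
    · rcases Nat.lt_or_ge r0 ℓ with h | h
      · have hvk : k ≤ padicValInt p ((G*H).coeff r0) :=
          (hvd _ k hcr0ne).mp (hdiv r0 h)
        have h2 : ℓ * k ≤ ℓ * padicValInt p ((G*H).coeff r0) := Nat.mul_le_mul_left _ hvk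
        have h3 : k * ℓ = ℓ * k := Nat.mul_comm _ _
        omega
      · have : k * ℓ ≤ k * r0 := Nat.mul_le_mul_left _ h
        omega
  have hchain : k * ℓ ≤ WG + WH := by
    have h1 : ℓ * padicValInt p ((G*H).coeff r0) + k * r0 ≤ ℓ * vm + k * r0 := by
      have := Nat.mul_le_mul_left ℓ hvcr0
      omega
    have h2 : ℓ * vm + k * r0 = WG + WH := by
      rw [← hωsum, hi0mem.2, hj0mem.2]
    omega
  -- upper bounds for WG, WH
  have hWGa : WG ≤ ℓ * a := by
    have := hWGle 0 h0G
    simpa [hωG_def, ha_def] using this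
  have hWHb : WH ≤ ℓ * b := by
    have := hWHle 0 h0H
    simpa [hωH_def, hb_def] using this
  have hWGs : WG ≤ k * s := by
    have := hWGle s hsG
    simpa [hωG_def, hvGs] using this
  have hWHt : WH ≤ k * t := by
    have := hWHle t htH
    simpa [hωH_def, hvHt] using this
  -- combine
  have hks : k * s + k * t = k * ℓ := by rw [← Nat.mul_add, hstℓ]
  have hlab : ℓ * a + ℓ * b = k * ℓ := by rw [← Nat.mul_add, hab, Nat.mul_comm]
  have hWGeq : WG = k * s := by omega
  have hlaks : ℓ * a = k * s := by omega
  -- coprimality contradiction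
  have hdvd : ℓ ∣ k * s := ⟨a, by omega⟩
  have hdvds : ℓ ∣ s := (Nat.Coprime.dvd_of_dvd_mul_left (hcop.symm) hdvd)
  have : ℓ ≤ s := Nat.le_of_dvd (by omega) hdvds
  omega

open Polynomial in
lemma rootloc (m : ℕ) (f : Polynomial ℤ)
    (α β : ℝ) (hα : 0 < α) (hαβ : α < β) (j : ℕ) (hj : j ≤ m) (hdeg : f.natDegree = m)
    (hineq : (|f.coeff j| : ℝ) * α ^ j >
      ((β / α) ^ (m - j)) * ∑ i ∈ (Finset.range (m + 1)).erase j, (|f.coeff i| : ℝ) * α ^ i)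
    (z : ℂ) (hz : (f.map (Int.castRingHom ℂ)).eval z = 0) :
    ‖z‖ < α ∨ β < ‖z‖ := by
  by_contra hcon
  push_neg at hcon
  obtain ⟨h1, h2⟩ := hcon
  set r := ‖z‖ with hr_def
  have hr0 : 0 < r := lt_of_lt_of_le hα h1
  -- the evaluation as a sum
  have hsum : (∑ i ∈ Finset.range (m + 1), ((f.coeff i : ℂ)) * z ^ i) = 0 := by
    have := hz
    rw [Polynomial.eval_map, Polynomial.eval₂_eq_sum_range] at this
    rw [hdeg] at this
    simpa using this
  have hjmem : j ∈ Finset.range (m+1) := Finset.mem_range.mpr (by omega)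
  have hmain : ((f.coeff j : ℂ)) * z ^ j
      = - ∑ i ∈ (Finset.range (m+1)).erase j, ((f.coeff i : ℂ)) * z ^ i := by
    have h := Finset.add_sum_erase _ (fun i => ((f.coeff i : ℂ)) * z ^ i) hjmem
    rw [← h] at hsum
    exact eq_neg_of_add_eq_zero_left hsum
  -- absolute values
  have habs : (|f.coeff j| : ℝ) * r ^ j ≤
      ∑ i ∈ (Finset.range (m+1)).erase j, (|f.coeff i| : ℝ) * r ^ i := by
    have h3 : ‖(((f.coeff j : ℂ)) * z ^ j)‖ = (|f.coeff j| : ℝ) * r ^ j := by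
      rw [norm_mul, norm_pow, Complex.norm_intCast, hr_def]
    calc (|f.coeff j| : ℝ) * r ^ j
        = ‖(((f.coeff j : ℂ)) * z ^ j)‖ := h3.symm
      _ = ‖(-∑ i ∈ (Finset.range (m+1)).erase j, ((f.coeff i : ℂ)) * z ^ i)‖ := by
          rw [hmain]
      _ = ‖(∑ i ∈ (Finset.range (m+1)).erase j, ((f.coeff i : ℂ)) * z ^ i)‖ :=
          norm_neg _
      _ ≤ ∑ i ∈ (Finset.range (m+1)).erase j, ‖(((f.coeff i : ℂ)) * z ^ i)‖ :=
          norm_sum_le _ _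
      _ = ∑ i ∈ (Finset.range (m+1)).erase j, (|f.coeff i| : ℝ) * r ^ i := by
          refine Finset.sum_congr rfl fun i _ => ?_
          rw [norm_mul, norm_pow, Complex.norm_intCast, hr_def]
  -- per-term bound
  have hbase : (1:ℝ) ≤ r / α := (one_le_div hα).mpr h1
  have hb2 : r / α ≤ β / α := by
    apply div_le_div_of_nonneg_right h2 hα.le
  have hterm : ∀ i ∈ (Finset.range (m+1)).erase j,
      (|f.coeff i| : ℝ) * r ^ i ≤
        (r/α)^j * ((β/α)^(m-j) * ((|f.coeff i| : ℝ) * α ^ i)) := by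
    intro i hi
    have him : i ≤ m := by
      have := Finset.mem_range.mp (Finset.mem_of_mem_erase hi); omega
    have hpow : (r/α)^i ≤ (r/α)^j * (β/α)^(m-j) := by
      calc (r/α)^i ≤ (r/α)^m := pow_le_pow_right₀ hbase him
        _ = (r/α)^j * (r/α)^(m-j) := by rw [← pow_add]; congr 1; omega
        _ ≤ (r/α)^j * (β/α)^(m-j) := by
            apply mul_le_mul_of_nonneg_left
            · exact pow_le_pow_left₀ (le_trans zero_le_one hbase) hb2 _
            · exact pow_nonneg (le_trans zero_le_one hbase) _
    have hri : r ^ i = α ^ i * (r/α)^i := by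
      rw [div_pow]
      field_simp
    have hnn : (0:ℝ) ≤ (|f.coeff i| : ℝ) * α ^ i := by positivity
    calc (|f.coeff i| : ℝ) * r ^ i = ((|f.coeff i| : ℝ) * α ^ i) * (r/α)^i := by
          rw [hri]; ring
      _ ≤ ((|f.coeff i| : ℝ) * α ^ i) * ((r/α)^j * (β/α)^(m-j)) :=
          mul_le_mul_of_nonneg_left hpow hnn
      _ = (r/α)^j * ((β/α)^(m-j) * ((|f.coeff i| : ℝ) * α ^ i)) := by ring
  have hsum2 : ∑ i ∈ (Finset.range (m+1)).erase j, (|f.coeff i| : ℝ) * r ^ i ≤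
      (r/α)^j * ((β/α)^(m-j) * ∑ i ∈ (Finset.range (m+1)).erase j, (|f.coeff i| : ℝ) * α ^ i) := by
    calc ∑ i ∈ (Finset.range (m+1)).erase j, (|f.coeff i| : ℝ) * r ^ i
        ≤ ∑ i ∈ (Finset.range (m+1)).erase j,
            (r/α)^j * ((β/α)^(m-j) * ((|f.coeff i| : ℝ) * α ^ i)) := Finset.sum_le_sum hterm
      _ = (r/α)^j * ((β/α)^(m-j) * ∑ i ∈ (Finset.range (m+1)).erase j, (|f.coeff i| : ℝ) * α ^ i) := by
          rw [Finset.mul_sum]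
          congr 1
          rw [Finset.mul_sum]
  have hposj : (0:ℝ) < (r/α)^j := pow_pos (div_pos hr0 hα) _
  have hstrict : (r/α)^j * ((β/α)^(m-j) * ∑ i ∈ (Finset.range (m+1)).erase j, (|f.coeff i| : ℝ) * α ^ i)
      < (r/α)^j * ((|f.coeff j| : ℝ) * α ^ j) := by
    exact mul_lt_mul_of_pos_left hineq hposj
  have heq : (r/α)^j * ((|f.coeff j| : ℝ) * α ^ j) = (|f.coeff j| : ℝ) * r ^ j := by
    rw [div_pow]
    field_simp
  linarith

-- helper: strict product bound over a multiset
lemma multiset_prod_lt {c : ℝ} (hc : 0 < c) :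
    ∀ (s : Multiset ℝ), s ≠ 0 → (∀ x ∈ s, c < x) → c ^ Multiset.card s < s.prod := by
  intro s
  induction s using Multiset.induction_on with
  | empty => intro h _; exact absurd rfl h
  | cons a s ih =>
    intro _ hall
    have ha : c < a := hall a (Multiset.mem_cons_self a s)
    rcases eq_or_ne s 0 with rfl | hs
    · simpa using ha
    · have ihs := ih hs (fun x hx => hall x (Multiset.mem_cons_of_mem hx))
      rw [Multiset.card_cons, Multiset.prod_cons, pow_succ']
      exact mul_lt_mul ha ihs.le (pow_pos hc _) (le_trans hc.le ha.le)

open Polynomial in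
lemma evalbound (f w : Polynomial ℤ) (hw : w ∣ f) (hf0 : f ≠ 0)
    (α β : ℝ) (hα : 0 < α)
    (hroots : ∀ z : ℂ, (f.map (Int.castRingHom ℂ)).eval z = 0 →
      ‖z‖ < α ∨ β < ‖z‖)
    (n d : ℕ) (hd : 0 < d) (hnα : (n : ℝ) ≥ α + d) (hnβ : (n : ℝ) ≤ β - d)
    (hwdeg : 1 ≤ w.natDegree) :
    (d : ℤ) < |w.eval (n : ℤ)| := by
  have hw0 : w ≠ 0 := fun h => hf0 (by simpa [h] using hw)
  set wc := w.map (Int.castRingHom ℂ) with hwc_def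
  have hinj : Function.Injective (Int.castRingHom ℂ) := Int.cast_injective
  have hwc0 : wc ≠ 0 := by
    rw [hwc_def, Ne, Polynomial.map_eq_zero_iff hinj]
    exact hw0
  have hsplit : wc.Splits := IsAlgClosed.splits wc
  have hfact : wc = Polynomial.C wc.leadingCoeff * (wc.roots.map fun a => X - C a).prod :=
    hsplit.eq_prod_roots
  have hcard : Multiset.card wc.roots = w.natDegree := by
    have h1 : wc.natDegree = Multiset.card (wc.map (RingHom.id ℂ)).roots :=
      by rw [Polynomial.map_id]; exact hsplit.natDegree_eq_card_roots
    rw [Polynomial.map_id] at h1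
    rw [← h1, hwc_def, Polynomial.natDegree_map_eq_of_injective hinj]
  -- each root is a root of f, hence away from n
  have hrootbound : ∀ z ∈ wc.roots, (d:ℝ) < ‖((n:ℂ) - z)‖ := by
    intro z hz
    have hzr : wc.eval z = 0 := ((Polynomial.mem_roots hwc0).mp hz)
    have hfz : (f.map (Int.castRingHom ℂ)).eval z = 0 := by
      obtain ⟨u, hu⟩ := hw
      rw [hu, Polynomial.map_mul, Polynomial.eval_mul, ← hwc_def, hzr, zero_mul]
    rcases hroots z hfz with h | h
    · have habs : ‖((n:ℂ))‖ - ‖z‖ ≤ ‖((n:ℂ) - z)‖ := by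
        simpa using norm_sub_norm_le ((n:ℂ)) z
      have hn : ‖((n:ℂ))‖ = (n:ℝ) := by
        rw [Complex.norm_natCast]
      rw [hn] at habs
      nlinarith [habs, h, hnα]
    · have habs : ‖z‖ - ‖((n:ℂ))‖ ≤ ‖((n:ℂ) - z)‖ := by
        have hh := norm_sub_norm_le z ((n:ℂ))
        rw [norm_sub_rev] at hh
        simpa using hh
      have hn : ‖((n:ℂ))‖ = (n:ℝ) := by
        rw [Complex.norm_natCast]
      rw [hn] at habs
      nlinarith [habs, h, hnβ]
  -- compute |w(n)|
  have hNeq : (((n:ℤ) : ℤ) : ℂ) = ((n:ℕ) : ℂ) := by push_cast; rfl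
  have habs2 : ((|w.eval (n:ℤ)| : ℤ) : ℝ) = ‖(wc.eval ((n:ℕ) : ℂ))‖ := by
    rw [← hNeq, hwc_def, Polynomial.eval_intCast_map]
    push_cast
    simp [Complex.norm_intCast]
  have hprod : ‖(wc.eval ((n:ℕ):ℂ))‖ =
      ‖((wc.leadingCoeff : ℂ))‖ *
        (wc.roots.map fun z => ‖((n:ℂ) - z)‖).prod := by
    conv_lhs => rw [hfact]
    rw [Polynomial.eval_mul, Polynomial.eval_C, norm_mul]
    congr 1
    rw [Polynomial.eval_multiset_prod, show ∀ s : Multiset ℂ, ‖s.prod‖ = (s.map (‖·‖)).prod from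
      fun s => map_multiset_prod (normHom : ℂ →*₀ ℝ) s, Multiset.map_map, Multiset.map_map]
    refine congrArg Multiset.prod (Multiset.map_congr rfl fun z _ => ?_)
    simp
  have hlead : (1:ℝ) ≤ ‖((wc.leadingCoeff : ℂ))‖ := by
    have : wc.leadingCoeff = ((w.leadingCoeff : ℤ) : ℂ) := by
      rw [hwc_def]
      exact Polynomial.leadingCoeff_map_of_leadingCoeff_ne_zero _ (by
        simpa using Polynomial.leadingCoeff_ne_zero.mpr hw0)
    rw [this, Complex.norm_intCast]
    have : (1:ℤ) ≤ |w.leadingCoeff| := Int.one_le_abs (Polynomial.leadingCoeff_ne_zero.mpr hw0)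
    calc (1:ℝ) ≤ ((|w.leadingCoeff| : ℤ) : ℝ) := by exact_mod_cast this
      _ = |((w.leadingCoeff : ℤ) : ℝ)| := by rw [Int.cast_abs]
  have hdpos : (0:ℝ) < d := by exact_mod_cast hd
  have hs0 : wc.roots ≠ 0 := by
    intro h
    have := hcard
    rw [h] at this
    simp at this
    omega
  have hprodlt : (d:ℝ) ^ (Multiset.card wc.roots) <
      (wc.roots.map fun z => ‖((n:ℂ) - z)‖).prod := by
    have := multiset_prod_lt hdpos (wc.roots.map fun z => ‖((n:ℂ) - z)‖)
      (by simpa using hs0)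
      (by
        intro x hx
        obtain ⟨z, hz, rfl⟩ := Multiset.mem_map.mp hx
        exact hrootbound z hz)
    simpa using this
  have hfinal : (d:ℝ) < ((|w.eval (n:ℤ)| : ℤ) : ℝ) := by
    rw [habs2, hprod]
    have hplt : (d:ℝ) ^ (Multiset.card wc.roots) ≥ (d:ℝ)^1 := by
      apply pow_le_pow_right₀
      · exact_mod_cast hd
      · omega
    have hprodpos : (0:ℝ) < (wc.roots.map fun z => ‖((n:ℂ) - z)‖).prod := by
      calc (0:ℝ) < (d:ℝ) ^ (Multiset.card wc.roots) := pow_pos hdpos _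
        _ < _ := hprodlt
    calc (d:ℝ) = (d:ℝ)^1 := (pow_one _).symm
      _ ≤ (d:ℝ) ^ (Multiset.card wc.roots) := hplt
      _ < (wc.roots.map fun z => ‖((n:ℂ) - z)‖).prod := hprodlt
      _ ≤ ‖((wc.leadingCoeff : ℂ))‖ *
            (wc.roots.map fun z => ‖((n:ℂ) - z)‖).prod := by
          nlinarith [hlead, hprodpos]
  exact_mod_cast hfinal

open Polynomial in
theorem stmt_10 (m : ℕ) (f : ℤ[X]) (hdeg : f.natDegree = m) (hprim : f.IsPrimitive)
    (α β : ℝ) (hα : 0 < α) (hαβ : α < β) (j : ℕ) (hj : j ≤ m)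
    (hineq : (|f.coeff j| : ℝ) * α ^ j >
      ((β / α) ^ (m - j)) * ∑ i ∈ (Finset.range (m + 1)).erase j, (|f.coeff i| : ℝ) * α ^ i)
    (n d k ℓ : ℕ) (hn : 0 < n) (hd : 0 < d) (hk : 0 < k) (hℓ : 0 < ℓ)
    (hℓm : ℓ ≤ m) (p : ℕ) (hp : p.Prime) (hpd : ¬ p ∣ d)
    (hnα : (n : ℝ) ≥ α + d) (hnβ : (n : ℝ) ≤ β - d)
    (hval : f.eval (n : ℤ) = (p : ℤ) ^ k * d ∨ f.eval (n : ℤ) = -((p : ℤ) ^ k * d))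
    (hcop : Nat.Coprime k ℓ)
    (hdiv : ∀ i < ℓ, (p : ℤ) ^ k ∣ (Polynomial.hasseDeriv i f).eval (n : ℤ))
    (hnd : 1 < k → ¬ (p : ℤ) ∣ (Polynomial.hasseDeriv ℓ f).eval (n : ℤ)) :
    Irreducible f := by
  have hpZ : Prime ((p:ℤ)) := Nat.prime_iff_prime_int.mp hp
  have hm1 : 1 ≤ m := le_trans hℓ hℓm
  have haj : f.coeff j ≠ 0 := by
    intro h
    rw [h] at hineq
    have hRHS : (0:ℝ) ≤ ((β / α) ^ (m - j)) *
        ∑ i ∈ (Finset.range (m + 1)).erase j, (|f.coeff i| : ℝ) * α ^ i := by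
      apply mul_nonneg
      · apply pow_nonneg
        apply div_nonneg (by linarith) hα.le
      · apply Finset.sum_nonneg
        intro i _
        positivity
    simp at hineq
    linarith
  have hf0 : f ≠ 0 := fun h => haj (by simp [h])
  -- p^{k+1} does not divide f(n)
  have hFk1 : ¬ ((p:ℤ))^(k+1) ∣ f.eval (n:ℤ) := by
    intro h
    have hppow : ((p:ℤ))^k ≠ 0 := pow_ne_zero _ (Int.natCast_ne_zero.mpr hp.ne_zero)
    have hpdZ : (p:ℤ) ∣ (d:ℤ) := by
      rcases hval with h1 | h1 <;> rw [h1] at h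
      · have h2 : ((p:ℤ))^k * (p:ℤ) ∣ ((p:ℤ))^k * d := by
          rwa [← pow_succ]
        exact (mul_dvd_mul_iff_left hppow).mp h2
      · rw [dvd_neg] at h
        have h2 : ((p:ℤ))^k * (p:ℤ) ∣ ((p:ℤ))^k * d := by
          rwa [← pow_succ]
        exact (mul_dvd_mul_iff_left hppow).mp h2
    exact hpd (Int.natCast_dvd_natCast.mp hpdZ)
  have hroots := rootloc m f α β hα hαβ j hj hdeg hineq
  -- helper : any factor whose value at n is prime to p is a unit
  have helper : ∀ a b : ℤ[X], f = a * b → ¬ (p:ℤ) ∣ b.eval (n:ℤ) → IsUnit b := by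
    intro a b hab hnb
    have hbdvd : b.eval (n:ℤ) ∣ f.eval (n:ℤ) := ⟨a.eval (n:ℤ), by rw [hab, eval_mul]; ring⟩
    have hbd : b.eval (n:ℤ) ∣ (d:ℤ) := by
      have h1 : b.eval (n:ℤ) ∣ ((p:ℤ))^k * d := by
        rcases hval with h | h
        · rwa [h] at hbdvd
        · rw [h, dvd_neg] at hbdvd
          exact hbdvd
      have hcop' : IsCoprime ((p:ℤ)^k) (b.eval (n:ℤ)) :=
        ((hpZ.coprime_iff_not_dvd).mpr hnb).pow_left
      exact (hcop'.symm).dvd_of_dvd_mul_left h1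
    have hble : |b.eval (n:ℤ)| ≤ (d:ℤ) := by
      apply Int.le_of_dvd (by exact_mod_cast hd)
      exact (abs_dvd _ _).mpr hbd
    have hdeg0 : b.natDegree = 0 := by
      by_contra hd0
      have := evalbound f b ⟨a, by rw [hab]; ring⟩ hf0 α β hα hroots n d hd hnα hnβ (by omega)
      linarith
    obtain ⟨c, rfl⟩ := Polynomial.natDegree_eq_zero.mp hdeg0
    apply Polynomial.isUnit_C.mpr
    apply hprim
    exact ⟨a, by rw [hab]; ring⟩
  constructor
  · intro hu
    have := Polynomial.natDegree_eq_zero_of_isUnit hu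
    omega
  · intro a b hab
    have htay : taylor (n:ℤ) a * taylor (n:ℤ) b = taylor (n:ℤ) f := by
      rw [← taylor_mul, ← hab]
    have hdisj : ¬ (p:ℤ) ∣ a.eval (n:ℤ) ∨ ¬ (p:ℤ) ∣ b.eval (n:ℤ) := by
      have h := keyval p k ℓ hp hk hℓ hcop (taylor (n:ℤ) a) (taylor (n:ℤ) b)
        (by rw [htay, taylor_coeff_zero]; exact hFk1)
        (by
          intro i hi
          rw [htay, taylor_coeff]
          exact hdiv i hi)
        (by
          intro hk2
          rw [htay, taylor_coeff]
          exact hnd hk2)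
      rcases h with h | h
      · left; rwa [taylor_coeff_zero] at h
      · right; rwa [taylor_coeff_zero] at h
    rcases hdisj with h | h
    · exact Or.inl (helper b a (by rw [hab, mul_comm]) h)
    · exact Or.inr (helper a b hab h)
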